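/- arXiv:0809.4340 — 2 statements merged into one kernel-verified Lean document; each statement's English description precedes it below -/
import Mathlib

section
/- Let m ∈ ℂ satisfy m ≠ 0, m³ ≠ 1, m³ ≠ −8, and (4 − m³)³ ≠ 27m⁶. Set J(m) := 27·(m(m³+8)/(m³−1))³ and μ := (4 − m³)/(3m²). Then J(μ) = −(1/27)·(J(m) − 2⁸·3³)³ / J(m)², i.e. J(μ) = −(1/27)·(J(m) − 6912)³ / J(m)². -/
/-- The `j`-invariant of the Hesse cubic with parameter `m`. -/
noncomputable def Jinv (m : ℂ) : ℂ := 27 * (m * (m ^ 3 + 8) / (m ^ 3 - 1)) ^ 3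

theorem hessian_dynamical_system_in_j (m : ℂ) (hm0 : m ≠ 0) (hm1 : m ^ 3 ≠ 1)
    (hm8 : m ^ 3 ≠ -8) (hmu : (4 - m ^ 3) ^ 3 ≠ 27 * m ^ 6) :
    Jinv ((4 - m ^ 3) / (3 * m ^ 2)) =
      -(1 / 27) * (Jinv m - 6912) ^ 3 / (Jinv m) ^ 2 := by
  have h1 : m ^ 3 - 1 ≠ 0 := sub_ne_zero.mpr hm1
  have h8 : m ^ 3 + 8 ≠ 0 := by intro h; exact hm8 (by linear_combination h)
  have h3m : (3 : ℂ) * m ^ 2 ≠ 0 := mul_ne_zero (by norm_num) (pow_ne_zero 2 hm0)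
  have h27m6 : (27 : ℂ) * m ^ 6 ≠ 0 := mul_ne_zero (by norm_num) (pow_ne_zero 6 hm0)
  have hsub : (4 - m ^ 3) ^ 3 - 27 * m ^ 6 ≠ 0 := sub_ne_zero.mpr hmu
  have hA : m * (m ^ 3 + 8) ≠ 0 := mul_ne_zero hm0 h8
  set A := m * (m ^ 3 + 8) with hAdef
  set B := m ^ 3 - 1 with hBdef
  set N := (4 - m ^ 3) * ((4 - m ^ 3) ^ 3 + 216 * m ^ 6) with hNdef
  set D := 3 * m ^ 2 * ((4 - m ^ 3) ^ 3 - 27 * m ^ 6) with hDdef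
  have hD : D ≠ 0 := mul_ne_zero h3m hsub
  have hmu3 : ((4 - m ^ 3) / (3 * m ^ 2)) ^ 3 - 1 =
      ((4 - m ^ 3) ^ 3 - 27 * m ^ 6) / (27 * m ^ 6) := by
    field_simp
    ring
  have hJm : Jinv m = 27 * A ^ 3 / B ^ 3 := by
    unfold Jinv
    rw [div_pow, mul_div_assoc]
  have e1 : Jinv ((4 - m ^ 3) / (3 * m ^ 2)) = 27 * N ^ 3 / D ^ 3 := by
    unfold Jinv
    rw [hmu3]
    have hX : (4 - m ^ 3) / (3 * m ^ 2) * (((4 - m ^ 3) / (3 * m ^ 2)) ^ 3 + 8) /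
        (((4 - m ^ 3) ^ 3 - 27 * m ^ 6) / (27 * m ^ 6)) = N / D := by
      rw [div_eq_div_iff (div_ne_zero hsub h27m6) hD, hNdef, hDdef]
      field_simp
      ring
    rw [hX, div_pow, mul_div_assoc]
  rw [e1, hJm]
  have hrhs : -(1 / 27) * (27 * A ^ 3 / B ^ 3 - 6912) ^ 3 / (27 * A ^ 3 / B ^ 3) ^ 2 =
      -((27 * A ^ 3 - 6912 * B ^ 3) ^ 3) / (19683 * A ^ 6 * B ^ 3) := by
    field_simp
    ring
  rw [hrhs]
  rw [div_eq_div_iff (pow_ne_zero 3 hD)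
    (mul_ne_zero (mul_ne_zero (by norm_num) (pow_ne_zero 6 hA)) (pow_ne_zero 3 h1))]
  rw [hNdef, hDdef, hAdef, hBdef]
  ring
end

section
/- The Weierstrass curve over ℂ with coefficients a₁ = a₂ = a₃ = 0, a₄ = −1/16, a₆ = −1/192 (the curve E_{1/4,1/48}, with equation v² = 4u³ − (1/4)u − 1/48 after rescaling) has j-invariant 6912; moreover for every m ∈ ℂ with m³ = 4 one has 27·(m(m³+8)/(m³−1))³ = 6912. Consequently J(C_{∛4}) = j(E_{1/4,1/48}) = 6912, where J(m) := 27·(m(m³+8)/(m³−1))³. -/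
/-- The Weierstrass curve `E_{1/4,1/48}`, i.e. `y² = x³ − (1/16)x − 1/192`, which is
`v² = 4u³ − (1/4)u − 1/48` after rescaling. -/
noncomputable def Especial : WeierstrassCurve ℂ :=
  { a₁ := 0, a₂ := 0, a₃ := 0, a₄ := -1 / 16, a₆ := -1 / 192 }

theorem j_of_special_curve_and_hesse_parameter :
    Especial.c₄ ^ 3 / Especial.Δ = 6912 ∧
      ∀ m : ℂ, m ^ 3 = 4 → 27 * (m * (m ^ 3 + 8) / (m ^ 3 - 1)) ^ 3 = 6912 := by
  constructor
  · simp only [Especial, WeierstrassCurve.c₄, WeierstrassCurve.Δ, WeierstrassCurve.b₂,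
      WeierstrassCurve.b₄, WeierstrassCurve.b₆, WeierstrassCurve.b₈]
    norm_num
  · intro m hm
    have h1 : m ^ 3 - 1 ≠ 0 := by rw [hm]; norm_num
    rw [div_pow, mul_pow, hm]
    norm_num
end
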